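/- arXiv:2507.15029 — 4 statements merged into one kernel-verified Lean document; each statement's English description precedes it below -/
import Mathlib

section
/- Let 1 < p < 2, let μ be a nonnegative locally finite Borel measure on ℝⁿ, let x ∈ ℝⁿ and ρ > 0. Then the truncated Wolff potential is controlled by the truncated Riesz potential: W^ρ_{1/p,p}(μ)(x) ≤ C (I_1^{2ρ}(μ)(x))^{1/(p-1)}, where C depends only on n and p. -/
open MeasureTheory Metric Set
open scoped ENNReal

/-- For `1 < p < 2`, the truncated Wolff potential `W^ρ_{1/p,p}(μ)(x)` is controlled by
`C (I_1^{2ρ}(μ)(x))^{1/(p-1)}`, with `C = C(n,p)`. -/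
theorem wolff_le_riesz_rpow (n : ℕ) (p : ℝ) (hp1 : 1 < p) (hp2 : p < 2) :
    ∃ C : ℝ, 0 < C ∧
      ∀ (μ : Measure (EuclideanSpace ℝ (Fin n))) [IsLocallyFiniteMeasure μ]
        (x : EuclideanSpace ℝ (Fin n)) (ρ : ℝ), 0 < ρ →
        (∫⁻ t in Ioo (0:ℝ) ρ,
            (μ (ball x t) / ENNReal.ofReal (t ^ ((n:ℝ) - 1))) ^ (1 / (p - 1))
              / ENNReal.ofReal t)
          ≤ ENNReal.ofReal C *
            ((∫⁻ t in Ioo (0:ℝ) (2 * ρ),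
                μ (ball x t) / ENNReal.ofReal (t ^ ((n:ℝ) - 1)) / ENNReal.ofReal t)
              ^ (1 / (p - 1))) := by
  have hp0 : 0 < p - 1 := by linarith
  have hq1 : 1 < 1 / (p - 1) := by
    rw [lt_div_iff₀ hp0]; linarith
  have hqpos : 0 < 1 / (p - 1) := by linarith
  have hr0 : 0 < 1 / (p - 1) - 1 := by linarith
  refine ⟨((2:ℝ) ^ n) ^ (1 / (p - 1) - 1), by positivity, ?_⟩
  intro μ _ x ρ hρ
  set I := ∫⁻ t in Ioo (0:ℝ) (2 * ρ),
      μ (ball x t) / ENNReal.ofReal (t ^ ((n:ℝ) - 1)) / ENNReal.ofReal t with hIdef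
  -- key pointwise bound
  have key : ∀ t ∈ Ioo (0:ℝ) ρ,
      μ (ball x t) / ENNReal.ofReal (t ^ ((n:ℝ) - 1)) ≤ ENNReal.ofReal ((2:ℝ) ^ n) * I := by
    intro t ht
    obtain ⟨ht0, htρ⟩ := ht
    have h2t : (0:ℝ) < 2 * t := by linarith
    have hsub : Ioo t (2 * t) ⊆ Ioo 0 (2 * ρ) := fun s hs =>
      ⟨ht0.trans hs.1, hs.2.trans_le (by linarith)⟩
    have hpt : ∀ s ∈ Ioo t (2 * t),
        μ (ball x t) / ENNReal.ofReal ((2 * t) ^ (n:ℝ)) ≤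
          μ (ball x s) / ENNReal.ofReal (s ^ ((n:ℝ) - 1)) / ENNReal.ofReal s := by
      intro s hs
      have hs0 : 0 < s := ht0.trans hs.1
      have hcomb : μ (ball x s) / ENNReal.ofReal (s ^ ((n:ℝ) - 1)) / ENNReal.ofReal s
          = μ (ball x s) / ENNReal.ofReal (s ^ (n:ℝ)) := by
        rw [div_eq_mul_inv, div_eq_mul_inv, div_eq_mul_inv, mul_assoc,
          ← ENNReal.mul_inv (Or.inl (by simp [ENNReal.ofReal_eq_zero]; positivity))
            (Or.inl ENNReal.ofReal_ne_top),
          ← ENNReal.ofReal_mul (by positivity)]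
        congr 2
        rw [Real.rpow_sub hs0, Real.rpow_one,
          div_mul_cancel₀ _ hs0.ne']
      rw [hcomb]
      refine ENNReal.div_le_div (measure_mono (ball_subset_ball hs.1.le)) ?_
      apply ENNReal.ofReal_le_ofReal
      exact Real.rpow_le_rpow hs0.le hs.2.le (Nat.cast_nonneg n)
    have hle1 : μ (ball x t) / ENNReal.ofReal ((2 * t) ^ (n:ℝ)) * ENNReal.ofReal t ≤ I := by
      have hvol : volume (Ioo t (2 * t)) = ENNReal.ofReal t := by
        rw [Real.volume_Ioo]; congr 1; ring
      calc μ (ball x t) / ENNReal.ofReal ((2 * t) ^ (n:ℝ)) * ENNReal.ofReal t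
          = ∫⁻ _ in Ioo t (2 * t), μ (ball x t) / ENNReal.ofReal ((2 * t) ^ (n:ℝ)) := by
            rw [setLIntegral_const, hvol]
        _ ≤ ∫⁻ s in Ioo t (2 * t),
              μ (ball x s) / ENNReal.ofReal (s ^ ((n:ℝ) - 1)) / ENNReal.ofReal s :=
            setLIntegral_mono' measurableSet_Ioo hpt
        _ ≤ I := lintegral_mono_set hsub
    have hval : ENNReal.ofReal ((2:ℝ) ^ n) * ENNReal.ofReal t
        / ENNReal.ofReal ((2 * t) ^ (n:ℝ)) = (ENNReal.ofReal (t ^ ((n:ℝ) - 1)))⁻¹ := by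
      rw [← ENNReal.ofReal_mul (by positivity), ← ENNReal.ofReal_div_of_pos (by positivity),
        ← ENNReal.ofReal_inv_of_pos (by positivity)]
      congr 1
      rw [Real.mul_rpow (by norm_num) ht0.le, Real.rpow_natCast (2:ℝ) n,
        Real.rpow_sub ht0, Real.rpow_one]
      have h1 : t ^ (n:ℝ) ≠ 0 := (Real.rpow_pos_of_pos ht0 _).ne'
      have h2 : ((2:ℝ) ^ n : ℝ) ≠ 0 := by positivity
      field_simp
    calc μ (ball x t) / ENNReal.ofReal (t ^ ((n:ℝ) - 1))
        = μ (ball x t) * (ENNReal.ofReal ((2:ℝ) ^ n) * ENNReal.ofReal t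
            / ENNReal.ofReal ((2 * t) ^ (n:ℝ))) := by rw [hval, div_eq_mul_inv]
      _ = ENNReal.ofReal ((2:ℝ) ^ n) *
            (μ (ball x t) / ENNReal.ofReal ((2 * t) ^ (n:ℝ)) * ENNReal.ofReal t) := by
          rw [div_eq_mul_inv, div_eq_mul_inv]; ring
      _ ≤ ENNReal.ofReal ((2:ℝ) ^ n) * I := mul_le_mul_right hle1 _
  rcases eq_or_ne I 0 with hI0 | hI0
  · have hz : (∫⁻ t in Ioo (0:ℝ) ρ,
        (μ (ball x t) / ENNReal.ofReal (t ^ ((n:ℝ) - 1))) ^ (1 / (p - 1))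
          / ENNReal.ofReal t) ≤ ∫⁻ _ in Ioo (0:ℝ) ρ, 0 := by
      refine setLIntegral_mono' measurableSet_Ioo fun t ht => ?_
      have h := key t ht
      rw [hI0, mul_zero] at h
      rw [le_antisymm h zero_le, ENNReal.zero_rpow_of_pos hqpos, ENNReal.zero_div]
    simp only [lintegral_zero] at hz
    exact le_trans hz zero_le
  rcases eq_or_ne I ∞ with hItop | hItop
  · rw [hItop, ENNReal.top_rpow_of_pos hqpos, ENNReal.mul_top (by
      simp [ENNReal.ofReal_eq_zero, not_le]; positivity)]
    exact le_top
  have hKne : ENNReal.ofReal ((2:ℝ) ^ n) * I ≠ ∞ :=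
    ENNReal.mul_ne_top ENNReal.ofReal_ne_top hItop
  have hKr_ne : (ENNReal.ofReal ((2:ℝ) ^ n) * I) ^ (1 / (p - 1) - 1) ≠ ∞ :=
    ENNReal.rpow_ne_top_of_nonneg hr0.le hKne
  calc (∫⁻ t in Ioo (0:ℝ) ρ,
        (μ (ball x t) / ENNReal.ofReal (t ^ ((n:ℝ) - 1))) ^ (1 / (p - 1))
          / ENNReal.ofReal t)
      ≤ ∫⁻ t in Ioo (0:ℝ) ρ, (ENNReal.ofReal ((2:ℝ) ^ n) * I) ^ (1 / (p - 1) - 1) *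
          (μ (ball x t) / ENNReal.ofReal (t ^ ((n:ℝ) - 1)) / ENNReal.ofReal t) := by
        refine setLIntegral_mono' measurableSet_Ioo fun t ht => ?_
        set a := μ (ball x t) / ENNReal.ofReal (t ^ ((n:ℝ) - 1)) with ha
        rcases eq_or_ne a 0 with ha0 | ha0
        · rw [ha0, ENNReal.zero_rpow_of_pos hqpos, ENNReal.zero_div]
          exact zero_le
        · have hane : a ≠ ∞ := ne_top_of_le_ne_top hKne (key t ht)
          have hsplit : a ^ (1 / (p - 1)) = a ^ (1 / (p - 1) - 1) * a := by
            have h := ENNReal.rpow_add (1 / (p - 1) - 1) 1 ha0 hane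
            rw [ENNReal.rpow_one] at h
            rw [← h]; congr 1; ring
          rw [hsplit, mul_div_assoc]
          exact mul_le_mul_left (ENNReal.rpow_le_rpow (key t ht) hr0.le) _
    _ = (ENNReal.ofReal ((2:ℝ) ^ n) * I) ^ (1 / (p - 1) - 1) *
          ∫⁻ t in Ioo (0:ℝ) ρ,
            μ (ball x t) / ENNReal.ofReal (t ^ ((n:ℝ) - 1)) / ENNReal.ofReal t :=
        lintegral_const_mul' _ _ hKr_ne
    _ ≤ (ENNReal.ofReal ((2:ℝ) ^ n) * I) ^ (1 / (p - 1) - 1) * I :=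
        mul_le_mul_right (lintegral_mono_set (Ioo_subset_Ioo le_rfl (by linarith))) _
    _ = ENNReal.ofReal (((2:ℝ) ^ n) ^ (1 / (p - 1) - 1)) * I ^ (1 / (p - 1)) := by
        rw [ENNReal.mul_rpow_of_nonneg _ _ hr0.le,
          ENNReal.ofReal_rpow_of_pos (by positivity), mul_assoc]
        congr 1
        have h := ENNReal.rpow_add (1 / (p - 1) - 1) 1 hI0 hItop
        rw [ENNReal.rpow_one] at h
        rw [← h]; congr 1; ring
end

section
/- Let ω : (0,1] → [0,∞) be nondecreasing with ∫_0^1 ω(r)^{2/p}/r dr < ∞ for some p ≥ 2, let ε ∈ (0,1), α₁ > 0 and R ∈ (0,1]. Define ω̃(t) = Σ_{i=0}^∞ ε^{α₁ i} ( ω(ε^{-i} t)^{2/p} · [ε^{-i} t ≤ R/2] + ω(R/2)^{2/p} · [ε^{-i} t > R/2] ) for t ∈ (0,1], where [P] denotes the Iverson bracket. Then ∫_0^1 ω̃(r)/r dr < ∞. -/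
open MeasureTheory Set
open scoped ENNReal

private lemma scale_lintegral (G : ℝ → ℝ≥0∞) (hG : Measurable G) {c : ℝ} (hc : 0 < c) :
    ∫⁻ t in Set.Ioo (0:ℝ) 1, G (c * t) = ENNReal.ofReal c⁻¹ * ∫⁻ s in Set.Ioo (0:ℝ) c, G s := by
  have hφ : Measurable fun t : ℝ => c * t := measurable_const_mul c
  have hpre : (fun t : ℝ => c * t) ⁻¹' Set.Ioo 0 c = Set.Ioo 0 1 := by
    rw [preimage_const_mul_Ioo₀ _ _ hc]
    simp [div_self hc.ne']
  have hmap : Measure.map (fun t : ℝ => c * t) (volume.restrict (Set.Ioo 0 1))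
      = ENNReal.ofReal c⁻¹ • volume.restrict (Set.Ioo 0 c) := by
    rw [← hpre, ← Measure.restrict_map hφ measurableSet_Ioo, Real.map_volume_mul_left hc.ne',
      Measure.restrict_smul, abs_of_pos (inv_pos.2 hc)]
  calc ∫⁻ t in Set.Ioo (0:ℝ) 1, G (c * t)
      = ∫⁻ s, G s ∂(Measure.map (fun t : ℝ => c * t) (volume.restrict (Set.Ioo 0 1))) := by
        rw [lintegral_map hG hφ]
    _ = ENNReal.ofReal c⁻¹ * ∫⁻ s in Set.Ioo (0:ℝ) c, G s := by
        rw [hmap, lintegral_smul_measure, smul_eq_mul]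

private lemma lint_inv_Ioc {a b : ℝ} (ha : 0 < a) (hab : a ≤ b) :
    ∫⁻ s in Set.Ioc a b, ENNReal.ofReal s⁻¹ = ENNReal.ofReal (Real.log (b / a)) := by
  have h0 : ∀ x ∈ Set.uIcc a b, x ≠ (0:ℝ) := by
    rw [Set.uIcc_of_le hab]
    intro x hx
    exact (lt_of_lt_of_le ha hx.1).ne'
  have hInt : IntervalIntegrable (fun x : ℝ => x⁻¹) volume a b :=
    intervalIntegral.intervalIntegrable_inv h0 continuousOn_id
  have hIOn : IntegrableOn (fun x : ℝ => x⁻¹) (Set.Ioc a b) volume :=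
    (intervalIntegrable_iff_integrableOn_Ioc_of_le hab).1 hInt
  have hnn : 0 ≤ᵐ[volume.restrict (Set.Ioc a b)] fun x : ℝ => x⁻¹ := by
    refine (ae_restrict_iff' measurableSet_Ioc).2 (ae_of_all _ fun x hx => ?_)
    exact inv_nonneg.2 (lt_of_lt_of_le ha hx.1.le).le
  rw [← MeasureTheory.ofReal_integral_eq_lintegral_ofReal hIOn hnn]
  congr 1
  rw [← intervalIntegral.integral_of_le hab]
  exact integral_inv (fun h => h0 0 h rfl)

/-- If `ω` is nondecreasing on `(0,1]` and `ω^{2/p}` satisfies the Dini condition, then the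
weighted tail sum `ω̃(t) = Σ_i ε^{α₁ i} (ω(ε^{-i}t)^{2/p} [ε^{-i}t ≤ R/2] + ω(R/2)^{2/p} [ε^{-i}t > R/2])`
also satisfies the Dini condition. -/
theorem dini_of_tail_sum (p ε α₁ R : ℝ) (hp : 2 ≤ p) (hε0 : 0 < ε) (hε1 : ε < 1)
    (hα : 0 < α₁) (hR0 : 0 < R) (hR1 : R ≤ 1)
    (ω : ℝ → ℝ) (hω0 : ∀ t ∈ Set.Ioc (0:ℝ) 1, 0 ≤ ω t)
    (hmono : MonotoneOn ω (Set.Ioc (0:ℝ) 1))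
    (hDini : ∫⁻ r in Set.Ioo (0:ℝ) 1, ENNReal.ofReal (ω r ^ (2 / p) / r) < ⊤) :
    (∫⁻ t in Set.Ioo (0:ℝ) 1,
        (∑' i : ℕ, ENNReal.ofReal (ε ^ (α₁ * (i:ℝ))) *
          (if ε ^ (-(i:ℝ)) * t ≤ R / 2
            then ENNReal.ofReal (ω (ε ^ (-(i:ℝ)) * t) ^ (2 / p))
            else ENNReal.ofReal (ω (R / 2) ^ (2 / p)))) / ENNReal.ofReal t) < ⊤ := by
  have hq0 : (0:ℝ) < 2 / p := div_pos two_pos (lt_of_lt_of_le two_pos hp)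
  set q : ℝ := 2 / p with hqdef
  have hr2 : (0:ℝ) < R / 2 := by linarith
  have hr2' : R / 2 ≤ 1 := by linarith
  have hr2mem : R / 2 ∈ Set.Ioc (0:ℝ) 1 := ⟨hr2, hr2'⟩
  set C : ℝ := ω (R / 2) ^ q with hCdef
  have hC0 : 0 ≤ C := Real.rpow_nonneg (hω0 _ hr2mem) q
  set h : ℝ → ℝ := fun s => if 0 < s then (if s ≤ R / 2 then ω s ^ q else C) else 0 with hhdef
  have hnn : ∀ s, 0 ≤ h s := by
    intro s; dsimp only [h]; split_ifs with h1 h2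
    · exact Real.rpow_nonneg (hω0 s ⟨h1, le_trans h2 hr2'⟩) q
    · exact hC0
    · exact le_refl 0
  have hhle : ∀ s, h s ≤ C := by
    intro s; dsimp only [h]; split_ifs with h1 h2
    · exact Real.rpow_le_rpow (hω0 s ⟨h1, le_trans h2 hr2'⟩)
        (hmono ⟨h1, le_trans h2 hr2'⟩ hr2mem h2) hq0.le
    · exact le_rfl
    · exact hC0
  have hhmono : Monotone h := by
    intro a b hab
    rcases le_or_gt a 0 with ha | ha
    · have h1 : h a = 0 := if_neg (not_lt.2 ha)
      rw [h1]; exact hnn b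
    · have hb : 0 < b := lt_of_lt_of_le ha hab
      rcases le_or_gt b (R/2) with hb2 | hb2
      · have ha2 : a ≤ R/2 := le_trans hab hb2
        have e1 : h a = ω a ^ q := by dsimp only [h]; rw [if_pos ha, if_pos ha2]
        have e2 : h b = ω b ^ q := by dsimp only [h]; rw [if_pos hb, if_pos hb2]
        rw [e1, e2]
        exact Real.rpow_le_rpow (hω0 a ⟨ha, le_trans ha2 hr2'⟩)
          (hmono ⟨ha, le_trans ha2 hr2'⟩ ⟨hb, le_trans hb2 hr2'⟩ hab) hq0.le
      · have e2 : h b = C := by dsimp only [h]; rw [if_pos hb, if_neg (not_le.2 hb2)]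
        rw [e2]; exact hhle a
  have hhmeas : Measurable h := hhmono.measurable
  set G : ℝ → ℝ≥0∞ := fun s => ENNReal.ofReal (h s) * (ENNReal.ofReal s)⁻¹ with hGdef
  have hGmeas : Measurable G :=
    (ENNReal.measurable_ofReal.comp hhmeas).mul ENNReal.measurable_ofReal.inv
  set F : ℕ → ℝ → ℝ≥0∞ := fun i t =>
    ENNReal.ofReal (ε ^ (α₁ * (i:ℝ))) *
      (ENNReal.ofReal (h (ε ^ (-(i:ℝ)) * t)) * (ENNReal.ofReal t)⁻¹) with hFdef
  have hFmeas : ∀ i, Measurable (F i) := by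
    intro i
    exact ((ENNReal.measurable_ofReal.comp (hhmeas.comp (measurable_const_mul _))).mul
      ENNReal.measurable_ofReal.inv).const_mul _
  have hcpos : ∀ i : ℕ, (0:ℝ) < ε ^ (-(i:ℝ)) := fun i => Real.rpow_pos_of_pos hε0 _
  have hcone : ∀ i : ℕ, (1:ℝ) ≤ ε ^ (-(i:ℝ)) := by
    intro i
    rw [Real.rpow_neg hε0.le]
    exact (one_le_inv₀ (Real.rpow_pos_of_pos hε0 _)).2
      (Real.rpow_le_one hε0.le hε1.le (Nat.cast_nonneg i))
  -- Step A: swap sum and integral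
  have stepA : (∫⁻ t in Set.Ioo (0:ℝ) 1,
        (∑' i : ℕ, ENNReal.ofReal (ε ^ (α₁ * (i:ℝ))) *
          (if ε ^ (-(i:ℝ)) * t ≤ R / 2
            then ENNReal.ofReal (ω (ε ^ (-(i:ℝ)) * t) ^ q)
            else ENNReal.ofReal (ω (R / 2) ^ q))) / ENNReal.ofReal t)
      = ∑' i : ℕ, ∫⁻ t in Set.Ioo (0:ℝ) 1, F i t := by
    rw [← lintegral_tsum (fun i => (hFmeas i).aemeasurable)]
    refine setLIntegral_congr_fun measurableSet_Ioo (fun t ht => ?_)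
    rw [div_eq_mul_inv, ← ENNReal.tsum_mul_right]
    congr 1
    funext i
    have hpos : 0 < ε ^ (-(i:ℝ)) * t := mul_pos (hcpos i) ht.1
    have e : (if ε ^ (-(i:ℝ)) * t ≤ R / 2
            then ENNReal.ofReal (ω (ε ^ (-(i:ℝ)) * t) ^ q)
            else ENNReal.ofReal (ω (R / 2) ^ q))
        = ENNReal.ofReal (h (ε ^ (-(i:ℝ)) * t)) := by
      dsimp only [h]
      rw [if_pos hpos, apply_ite ENNReal.ofReal]
    rw [e, mul_assoc]
  -- Step B: per-term change of variables
  have stepB : ∀ i : ℕ, ∫⁻ t in Set.Ioo (0:ℝ) 1, F i t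
      = ENNReal.ofReal (ε ^ (α₁ * (i:ℝ))) * ∫⁻ s in Set.Ioo (0:ℝ) (ε ^ (-(i:ℝ))), G s := by
    intro i
    set c : ℝ := ε ^ (-(i:ℝ)) with hcdef
    have hc : 0 < c := hcpos i
    have hne0 : ENNReal.ofReal c ≠ 0 := by simp [hc]
    have hnetop : ENNReal.ofReal c ≠ ⊤ := ENNReal.ofReal_ne_top
    have inner : ∫⁻ t in Set.Ioo (0:ℝ) 1, ENNReal.ofReal (h (c * t)) * (ENNReal.ofReal t)⁻¹
        = ∫⁻ s in Set.Ioo (0:ℝ) c, G s := by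
      calc ∫⁻ t in Set.Ioo (0:ℝ) 1, ENNReal.ofReal (h (c * t)) * (ENNReal.ofReal t)⁻¹
          = ∫⁻ t in Set.Ioo (0:ℝ) 1, ENNReal.ofReal c * G (c * t) := by
            refine setLIntegral_congr_fun measurableSet_Ioo (fun t ht => ?_)
            rw [hGdef]
            dsimp only
            rw [ENNReal.ofReal_mul hc.le,
              ENNReal.mul_inv (Or.inl hne0) (Or.inl hnetop),
              show ENNReal.ofReal c * (ENNReal.ofReal (h (c*t)) *
                ((ENNReal.ofReal c)⁻¹ * (ENNReal.ofReal t)⁻¹))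
                = (ENNReal.ofReal c * (ENNReal.ofReal c)⁻¹) *
                  (ENNReal.ofReal (h (c*t)) * (ENNReal.ofReal t)⁻¹) from by ring,
              ENNReal.mul_inv_cancel hne0 hnetop, one_mul]
        _ = ENNReal.ofReal c * ∫⁻ t in Set.Ioo (0:ℝ) 1, G (c * t) :=
            lintegral_const_mul' _ _ hnetop
        _ = ENNReal.ofReal c * (ENNReal.ofReal c⁻¹ * ∫⁻ s in Set.Ioo (0:ℝ) c, G s) := by
            rw [scale_lintegral G hGmeas hc]
        _ = ∫⁻ s in Set.Ioo (0:ℝ) c, G s := by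
            rw [← mul_assoc, ← ENNReal.ofReal_mul hc.le, mul_inv_cancel₀ hc.ne',
              ENNReal.ofReal_one, one_mul]
    rw [hFdef]
    dsimp only
    rw [lintegral_const_mul' _ _ ENNReal.ofReal_ne_top, inner]
  -- notation for the Dini integral
  set D : ℝ≥0∞ := ∫⁻ r in Set.Ioo (0:ℝ) 1, ENNReal.ofReal (ω r ^ q / r) with hDdef
  -- Step C: bound the inner integral
  have stepC : ∀ i : ℕ, (∫⁻ s in Set.Ioo (0:ℝ) (ε ^ (-(i:ℝ))), G s)
      ≤ D + ENNReal.ofReal C * ENNReal.ofReal (Real.log (ε ^ (-(i:ℝ)) / (R / 2))) := by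
    intro i
    set c : ℝ := ε ^ (-(i:ℝ)) with hcdef
    have hc : 0 < c := hcpos i
    have hRc : R / 2 ≤ c := le_trans hr2' (hcone i)
    have hsub : Set.Ioo (0:ℝ) c ⊆ Set.Ioo 0 (R/2) ∪ Set.Icc (R/2) c := by
      intro s hs
      rcases lt_or_ge s (R/2) with hlt | hle
      · exact Or.inl ⟨hs.1, hlt⟩
      · exact Or.inr ⟨hle, hs.2.le⟩
    have h1 : (∫⁻ s in Set.Ioo (0:ℝ) (R/2), G s) ≤ D := by
      have e : ∫⁻ s in Set.Ioo (0:ℝ) (R/2), G s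
          = ∫⁻ s in Set.Ioo (0:ℝ) (R/2), ENNReal.ofReal (ω s ^ q / s) := by
        refine setLIntegral_congr_fun measurableSet_Ioo (fun s hs => ?_)
        rw [hGdef]
        dsimp only [h]
        rw [if_pos hs.1, if_pos hs.2.le, ENNReal.ofReal_div_of_pos hs.1, div_eq_mul_inv]
      rw [e, hDdef]
      exact lintegral_mono_set (Set.Ioo_subset_Ioo_right hr2')
    have h2 : (∫⁻ s in Set.Icc (R/2) c, G s)
        ≤ ENNReal.ofReal C * ENNReal.ofReal (Real.log (c / (R / 2))) := by
      rw [Measure.restrict_congr_set Ioc_ae_eq_Icc.symm]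
      calc (∫⁻ s in Set.Ioc (R/2) c, G s)
          ≤ ∫⁻ s in Set.Ioc (R/2) c, ENNReal.ofReal C * ENNReal.ofReal s⁻¹ := by
            refine setLIntegral_mono' measurableSet_Ioc fun s hs => ?_
            have hs0 : 0 < s := lt_trans hr2 hs.1
            rw [hGdef]
            dsimp only
            rw [← ENNReal.ofReal_inv_of_pos hs0]
            exact mul_le_mul_left (ENNReal.ofReal_le_ofReal (hhle s)) _
        _ = ENNReal.ofReal C * ∫⁻ s in Set.Ioc (R/2) c, ENNReal.ofReal s⁻¹ :=
            lintegral_const_mul' _ _ ENNReal.ofReal_ne_top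
        _ = ENNReal.ofReal C * ENNReal.ofReal (Real.log (c / (R / 2))) := by
            rw [lint_inv_Ioc hr2 hRc]
    calc (∫⁻ s in Set.Ioo (0:ℝ) c, G s)
        ≤ ∫⁻ s in Set.Ioo (0:ℝ) (R/2) ∪ Set.Icc (R/2) c, G s := lintegral_mono_set hsub
      _ ≤ (∫⁻ s in Set.Ioo (0:ℝ) (R/2), G s) + ∫⁻ s in Set.Icc (R/2) c, G s :=
          lintegral_union_le _ _ _
      _ ≤ D + ENNReal.ofReal C * ENNReal.ofReal (Real.log (c / (R / 2))) := add_le_add h1 h2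
  -- Step D: log bound and geometric factor
  set L : ℝ := Real.log ε⁻¹ with hLdef
  set M : ℝ := Real.log (2 / R) with hMdef
  have hL0 : 0 ≤ L := Real.log_nonneg ((one_le_inv₀ hε0).2 hε1.le)
  have hM0 : 0 ≤ M := Real.log_nonneg ((one_le_div hR0).2 (by linarith))
  set K : ℝ := L + M with hKdef
  have hK0 : 0 ≤ K := by positivity
  have hlog : ∀ i : ℕ, Real.log (ε ^ (-(i:ℝ)) / (R / 2)) ≤ ((i:ℝ) + 1) * K := by
    intro i
    have hc := hcpos i
    have e : Real.log (ε ^ (-(i:ℝ)) / (R / 2)) = (i:ℝ) * L + M := by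
      rw [Real.log_div hc.ne' hr2.ne', Real.log_rpow hε0, hLdef, Real.log_inv, hMdef,
        show (2:ℝ)/R = (R/2)⁻¹ from by field_simp, Real.log_inv]
      ring
    rw [e, hKdef]
    have hi : (0:ℝ) ≤ (i:ℝ) := Nat.cast_nonneg i
    nlinarith
  set r : ℝ := ε ^ α₁ with hrdef
  have hrpos : 0 < r := Real.rpow_pos_of_pos hε0 _
  have hrlt : r < 1 := Real.rpow_lt_one hε0.le hε1 hα
  have hgeom : ∀ i : ℕ, ε ^ (α₁ * (i:ℝ)) = r ^ i := by
    intro i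
    rw [hrdef, ← Real.rpow_natCast (ε ^ α₁) i, ← Real.rpow_mul hε0.le]
  -- final summation
  set d : ℝ := D.toReal with hddef
  have hd0 : 0 ≤ d := ENNReal.toReal_nonneg
  have hDle : D = ENNReal.ofReal d := (ENNReal.ofReal_toReal hDini.ne).symm
  have key : ∀ i : ℕ, (∫⁻ t in Set.Ioo (0:ℝ) 1, F i t)
      ≤ ENNReal.ofReal (r ^ i * (d + C * (((i:ℝ) + 1) * K))) := by
    intro i
    rw [stepB i]
    calc ENNReal.ofReal (ε ^ (α₁ * (i:ℝ))) * ∫⁻ s in Set.Ioo (0:ℝ) (ε ^ (-(i:ℝ))), G s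
        ≤ ENNReal.ofReal (r ^ i) *
            (D + ENNReal.ofReal C * ENNReal.ofReal (Real.log (ε ^ (-(i:ℝ)) / (R / 2)))) := by
          rw [hgeom i]
          exact mul_le_mul_right (stepC i) _
      _ ≤ ENNReal.ofReal (r ^ i) *
            (ENNReal.ofReal d + ENNReal.ofReal C * ENNReal.ofReal (((i:ℝ) + 1) * K)) := by
          refine mul_le_mul_right (add_le_add (le_of_eq hDle) (mul_le_mul_right ?_ _)) _
          exact ENNReal.ofReal_le_ofReal (hlog i)
      _ = ENNReal.ofReal (r ^ i * (d + C * (((i:ℝ) + 1) * K))) := by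
          rw [← ENNReal.ofReal_mul hC0, ← ENNReal.ofReal_add hd0 (by positivity),
            ← ENNReal.ofReal_mul (by positivity)]
  have hsum : Summable (fun i : ℕ => r ^ i * (d + C * (((i:ℝ) + 1) * K))) := by
    have S1 : Summable (fun i : ℕ => r ^ i) := summable_geometric_of_lt_one hrpos.le hrlt
    have S2 : Summable (fun i : ℕ => (i:ℝ) * r ^ i) := by
      simpa using summable_pow_mul_geometric_of_norm_lt_one 1
        (r := r) (by rw [Real.norm_eq_abs, abs_of_pos hrpos]; exact hrlt)
    have e : (fun i : ℕ => r ^ i * (d + C * (((i:ℝ) + 1) * K)))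
        = fun i : ℕ => (d + C * K) * r ^ i + (C * K) * ((i:ℝ) * r ^ i) := by
      funext i; ring
    rw [e]
    exact (S1.mul_left _).add (S2.mul_left _)
  calc (∫⁻ t in Set.Ioo (0:ℝ) 1,
        (∑' i : ℕ, ENNReal.ofReal (ε ^ (α₁ * (i:ℝ))) *
          (if ε ^ (-(i:ℝ)) * t ≤ R / 2
            then ENNReal.ofReal (ω (ε ^ (-(i:ℝ)) * t) ^ q)
            else ENNReal.ofReal (ω (R / 2) ^ q))) / ENNReal.ofReal t)
      = ∑' i : ℕ, ∫⁻ t in Set.Ioo (0:ℝ) 1, F i t := stepA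
    _ ≤ ∑' i : ℕ, ENNReal.ofReal (r ^ i * (d + C * (((i:ℝ) + 1) * K))) :=
        ENNReal.tsum_le_tsum key
    _ = ENNReal.ofReal (∑' i : ℕ, r ^ i * (d + C * (((i:ℝ) + 1) * K))) :=
        (ENNReal.ofReal_tsum_of_nonneg (fun i => by positivity) hsum).symm
    _ < ⊤ := ENNReal.ofReal_lt_top
end

section
/- Let 1 < p < 2, s ≥ 0, B ⊂ ℝⁿ a ball, and f, g : B → ℝⁿ measurable with (|f|² + |g|² + s²)^{p/2} integrable on B. Then the Hölder-interpolation bound ⨍_B |f − g|^p dx ≤ C ( ⨍_B |V(f) − V(g)|² dx )^{p/2} ( ⨍_B (|f|² + |g|² + s²)^{p/2} dx )^{(2-p)/2} holds, where V(ξ) = (|ξ|²+s²)^{(p-2)/4} ξ and C depends only on n and p. -/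
set_option maxHeartbeats 1000000

open MeasureTheory Metric Real ENNReal

section Aux

variable {E : Type*} [NormedAddCommGroup E] [InnerProductSpace ℝ E]

lemma scalarA {p : ℝ} (hp1 : 1 < p) (hp2 : p < 2) {s : ℝ}
    {a b : ℝ} (hb : 0 ≤ b) (hab : b ≤ a) :
    p / 2 * ((a - b) * (a ^ 2 + b ^ 2 + s ^ 2) ^ ((p - 2) / 4))
      ≤ a * (a ^ 2 + s ^ 2) ^ ((p - 2) / 4) - b * (b ^ 2 + s ^ 2) ^ ((p - 2) / 4) := by
  have ha : 0 ≤ a := hb.trans hab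
  set e : ℝ := (p - 2) / 4 with he
  have he0 : e ≤ 0 := by rw [he]; linarith
  rcases eq_or_lt_of_le hb with hb0 | hbpos
  · -- b = 0
    rw [← hb0]
    simp only [zero_mul, sub_zero, ne_eq, OfNat.ofNat_ne_zero, not_false_eq_true, zero_pow,
      add_zero, zero_add, sub_zero]
    have h1 : 0 ≤ a * (a ^ 2 + s ^ 2) ^ e := by positivity
    nlinarith [h1]
  · -- 0 < b ≤ a
    set K : ℝ := (a ^ 2 + b ^ 2 + s ^ 2) ^ e with hK
    have hKpos : 0 < a ^ 2 + b ^ 2 + s ^ 2 := by positivity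
    -- derivative of h(t) = t * (t^2+s^2)^e
    set D : ℝ → ℝ := fun t => (t ^ 2 + s ^ 2) ^ e + t * (2 * t * (e * (t ^ 2 + s ^ 2) ^ (e - 1)))
      with hD
    have hderiv : ∀ t ∈ Set.uIcc b a, HasDerivAt (fun t => t * (t ^ 2 + s ^ 2) ^ e) (D t) t := by
      intro t ht
      rw [Set.uIcc_of_le hab] at ht
      have htpos : 0 < t := lt_of_lt_of_le hbpos ht.1
      have hbase : t ^ 2 + s ^ 2 ≠ 0 := by positivity
      have h1 : HasDerivAt (fun t : ℝ => t ^ 2 + s ^ 2) (2 * t) t := by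
        simpa using ((hasDerivAt_pow 2 t).add_const (s ^ 2))
      have h2 : HasDerivAt (fun t : ℝ => (t ^ 2 + s ^ 2) ^ e) (2 * t * (e * (t^2+s^2) ^ (e-1))) t := by
        have := (Real.hasDerivAt_rpow_const (x := t ^ 2 + s ^ 2) (p := e) (Or.inl hbase)).comp t h1
        rw [show 2 * t * (e * (t^2+s^2) ^ (e-1)) = e * (t ^ 2 + s ^ 2) ^ (e - 1) * (2 * t) by ring]; exact this
      have h3 := (hasDerivAt_id' t).mul h2; rw [one_mul] at h3; exact h3
    have hcont : ∀ t ∈ Set.uIcc b a, 0 < t := by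
      intro t ht; rw [Set.uIcc_of_le hab] at ht; exact lt_of_lt_of_le hbpos ht.1
    have hDcont : ContinuousOn D (Set.uIcc b a) := by
      apply ContinuousOn.add
      · apply ContinuousOn.rpow_const
        · fun_prop
        · intro t ht; left; have := hcont t ht; positivity
      · apply ContinuousOn.mul (by fun_prop)
        apply ContinuousOn.mul (by fun_prop)
        apply ContinuousOn.mul continuousOn_const
        apply ContinuousOn.rpow_const (by fun_prop)
        intro t ht; left; have := hcont t ht; positivity
    have hint : IntervalIntegrable D volume b a := hDcont.intervalIntegrable
    have heq : ∫ t in b..a, D t = a * (a ^ 2 + s ^ 2) ^ e - b * (b ^ 2 + s ^ 2) ^ e :=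
      intervalIntegral.integral_eq_sub_of_hasDerivAt hderiv hint
    have hlow : ∀ t ∈ Set.Icc b a, p / 2 * K ≤ D t := by
      intro t ht
      have ht0 : 0 < t := lt_of_lt_of_le hbpos ht.1
      have hu : 0 < t ^ 2 + s ^ 2 := by positivity
      have hsplit : (t ^ 2 + s ^ 2) ^ e = (t ^ 2 + s ^ 2) ^ (e - 1) * (t ^ 2 + s ^ 2) := by
        rw [← Real.rpow_add_one hu.ne' (e - 1)]; ring_nf
      have hDval : D t = (t ^ 2 + s ^ 2) ^ (e - 1) * ((t ^ 2 + s ^ 2) + 2 * e * t ^ 2) := by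
        rw [hD]; dsimp only; rw [hsplit]; ring
      have h2e : (t ^ 2 + s ^ 2) + 2 * e * t ^ 2 = p / 2 * t ^ 2 + s ^ 2 := by
        rw [he]; ring
      have hstep1 : p / 2 * ((t ^ 2 + s ^ 2) ^ (e - 1) * (t ^ 2 + s ^ 2)) ≤ D t := by
        rw [hDval, h2e]
        have hpow : 0 < (t ^ 2 + s ^ 2) ^ (e - 1) := Real.rpow_pos_of_pos hu _
        have : p / 2 * (t ^ 2 + s ^ 2) ≤ p / 2 * t ^ 2 + s ^ 2 := by nlinarith
        nlinarith
      rw [← hsplit] at hstep1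
      refine le_trans ?_ hstep1
      have hK2 : K ≤ (t ^ 2 + s ^ 2) ^ e := by
        rw [hK]
        apply Real.rpow_le_rpow_of_nonpos hu _ he0
        nlinarith [ht.2, sq_nonneg b, ht0.le, ha]
      nlinarith
    have hmono : p / 2 * ((a - b) * K) ≤ ∫ t in b..a, D t := by
      have := intervalIntegral.integral_mono_on hab (intervalIntegrable_const) hint hlow
      simpa [intervalIntegral.integral_const, smul_eq_mul] using this
    rw [heq] at hmono
    nlinarith [hmono]

lemma scalarB {p : ℝ} (hp1 : 1 < p) (hp2 : p < 2) {s W : ℝ}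
    {a : ℝ} (ha : 0 ≤ a) (hW : a ^ 2 + s ^ 2 ≤ W) :
    p / 2 * (a * W ^ ((p - 2) / 4)) ≤ a * (a ^ 2 + s ^ 2) ^ ((p - 2) / 4) := by
  rcases eq_or_lt_of_le ha with h0 | hapos
  · rw [← h0]; simp
  · have hu : 0 < a ^ 2 + s ^ 2 := by positivity
    have h1 : W ^ ((p - 2) / 4) ≤ (a ^ 2 + s ^ 2) ^ ((p - 2) / 4) :=
      Real.rpow_le_rpow_of_nonpos hu hW (by linarith)
    have h2 : 0 ≤ W ^ ((p - 2) / 4) := by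
      have : (0:ℝ) < W := lt_of_lt_of_le hu hW
      positivity
    nlinarith [mul_le_mul_of_nonneg_left h1 ha, mul_nonneg ha h2]

lemma vecbound {p : ℝ} (hp1 : 1 < p) (hp2 : p < 2) {s : ℝ} (ξ η : E) :
    ‖ξ - η‖ ≤ 2 / p * ‖(‖ξ‖ ^ 2 + s ^ 2) ^ ((p - 2) / 4) • ξ -
        (‖η‖ ^ 2 + s ^ 2) ^ ((p - 2) / 4) • η‖
      * (‖ξ‖ ^ 2 + ‖η‖ ^ 2 + s ^ 2) ^ ((2 - p) / 4) := by
  have hp0 : 0 < p := by linarith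
  set e : ℝ := (p - 2) / 4 with he
  set a : ℝ := ‖ξ‖ with hadef
  set b : ℝ := ‖η‖ with hbdef
  have ha : 0 ≤ a := norm_nonneg _
  have hb : 0 ≤ b := norm_nonneg _
  set μa : ℝ := (a ^ 2 + s ^ 2) ^ e with hma
  set μb : ℝ := (b ^ 2 + s ^ 2) ^ e with hmb
  have hμa : 0 ≤ μa := Real.rpow_nonneg (by positivity) _
  have hμb : 0 ≤ μb := Real.rpow_nonneg (by positivity) _
  set W : ℝ := a ^ 2 + b ^ 2 + s ^ 2 with hWdef
  have hW0 : 0 ≤ W := by positivity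
  rcases eq_or_lt_of_le hW0 with hWz | hWpos
  · -- W = 0 : ξ = η = 0
    have haz : a = 0 := by nlinarith [sq_nonneg a, sq_nonneg b, sq_nonneg s]
    have hbz : b = 0 := by nlinarith [sq_nonneg a, sq_nonneg b, sq_nonneg s]
    have hξ : ξ = 0 := norm_eq_zero.mp haz
    have hη : η = 0 := norm_eq_zero.mp hbz
    rw [hξ, hη]
    simp
  · -- main case
    set c : ℝ := inner ℝ ξ η with hc
    have hc1 : c ≤ a * b := real_inner_le_norm ξ η
    have hc2 : -(a * b) ≤ c := by
      have := abs_real_inner_le_norm ξ η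
      rw [abs_le] at this; exact this.1
    have hWe : 0 ≤ W ^ e := Real.rpow_nonneg hW0 _
    -- endpoint fact 1
    have Fab : (p / 2 * ((a - b) * W ^ e)) ^ 2 ≤ (a * μa - b * μb) ^ 2 := by
      rcases le_total b a with h | h
      · have h1 := scalarA hp1 hp2 (s := s) hb h
        rw [← hWdef, ← hma, ← hmb] at h1
        have h0 : 0 ≤ p / 2 * ((a - b) * W ^ e) := by
          have : 0 ≤ a - b := by linarith
          positivity
        exact pow_le_pow_left₀ h0 h1 2
      · have h1 := scalarA hp1 hp2 (s := s) ha h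
        have hWsymm : b ^ 2 + a ^ 2 + s ^ 2 = W := by rw [hWdef]; ring
        rw [hWsymm, ← hma, ← hmb] at h1
        have h0 : 0 ≤ p / 2 * ((b - a) * W ^ e) := by
          have : 0 ≤ b - a := by linarith
          positivity
        have h1sq := pow_le_pow_left₀ h0 h1 2
        nlinarith [h1sq]
    -- endpoint fact 2
    have Fmab : (p / 2 * ((a + b) * W ^ e)) ^ 2 ≤ (a * μa + b * μb) ^ 2 := by
      have haW : a ^ 2 + s ^ 2 ≤ W := by rw [hWdef]; nlinarith [sq_nonneg b]
      have hbW : b ^ 2 + s ^ 2 ≤ W := by rw [hWdef]; nlinarith [sq_nonneg a]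
      have h1 := scalarB hp1 hp2 (s := s) ha haW
      have h2 := scalarB hp1 hp2 (s := s) hb hbW
      rw [← hma] at h1
      rw [← hmb] at h2
      have h0 : 0 ≤ p / 2 * ((a + b) * W ^ e) := by positivity
      have hsum : p / 2 * ((a + b) * W ^ e) ≤ a * μa + b * μb := by linarith
      exact pow_le_pow_left₀ h0 hsum 2
    -- squared key inequality
    have key : (p / 2 * (‖ξ - η‖ * W ^ e)) ^ 2
        ≤ ‖(a ^ 2 + s ^ 2) ^ e • ξ - (b ^ 2 + s ^ 2) ^ e • η‖ ^ 2 := by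
      have hn1 : ‖ξ - η‖ ^ 2 = a ^ 2 - 2 * c + b ^ 2 := by
        rw [hc, hadef, hbdef]; exact norm_sub_sq_real ξ η
      have hn2 : ‖(a ^ 2 + s ^ 2) ^ e • ξ - (b ^ 2 + s ^ 2) ^ e • η‖ ^ 2
          = μa ^ 2 * a ^ 2 - 2 * (μa * μb) * c + μb ^ 2 * b ^ 2 := by
        rw [norm_sub_sq_real, norm_smul, norm_smul, real_inner_smul_left, real_inner_smul_right]
        rw [Real.norm_eq_abs, Real.norm_eq_abs, abs_of_nonneg hμa, abs_of_nonneg hμb,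
          ← hadef, ← hbdef, ← hc, ← hma, ← hmb]
        ring
      rw [hn2, mul_pow, mul_pow, hn1]
      rcases eq_or_lt_of_le (mul_nonneg ha hb) with hab0 | habpos
      · have hab0' : a * b = 0 := hab0.symm
        have hceq : c = 0 := le_antisymm (by rw [hab0'] at hc1; exact hc1)
          (by rw [hab0'] at hc2; simpa using hc2)
        rw [hceq]
        rcases mul_eq_zero.mp hab0' with h | h
        · rw [h] at Fmab
          rw [h]
          nlinarith [Fmab]
        · rw [h] at Fmab
          rw [h]
          nlinarith [Fmab]
      · have t1 : 0 ≤ (a * b + c) * ((a * μa - b * μb) ^ 2 - (p / 2 * ((a - b) * W ^ e)) ^ 2) :=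
          mul_nonneg (by linarith) (by linarith [Fab])
        have t2 : 0 ≤ (a * b - c) * ((a * μa + b * μb) ^ 2 - (p / 2 * ((a + b) * W ^ e)) ^ 2) :=
          mul_nonneg (by linarith) (by linarith [Fmab])
        nlinarith [t1, t2, habpos]
    -- take square roots
    have key2 : p / 2 * (‖ξ - η‖ * W ^ e)
        ≤ ‖(a ^ 2 + s ^ 2) ^ e • ξ - (b ^ 2 + s ^ 2) ^ e • η‖ := by
      have h0 : 0 ≤ p / 2 * (‖ξ - η‖ * W ^ e) := by positivity
      have := Real.sqrt_le_sqrt key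
      rwa [Real.sqrt_sq h0, Real.sqrt_sq (norm_nonneg _)] at this
    -- multiply by W^{(2-p)/4}
    have hWne : W ^ e * W ^ ((2 - p) / 4) = 1 := by
      rw [← Real.rpow_add hWpos, he]
      rw [show (p - 2) / 4 + (2 - p) / 4 = (0:ℝ) by ring, Real.rpow_zero]
    have hWme : 0 ≤ W ^ ((2 - p) / 4) := Real.rpow_nonneg hW0 _
    have := mul_le_mul_of_nonneg_right key2 hWme
    calc ‖ξ - η‖ = 2 / p * (p / 2 * (‖ξ - η‖ * W ^ e) * W ^ ((2 - p) / 4)) := by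
            rw [mul_assoc (p/2), mul_assoc, hWne]
            field_simp
      _ ≤ 2 / p * (‖(a ^ 2 + s ^ 2) ^ e • ξ - (b ^ 2 + s ^ 2) ^ e • η‖ * W ^ ((2 - p) / 4)) := by
            apply mul_le_mul_of_nonneg_left this (by positivity)
      _ = _ := by rw [mul_assoc]

lemma Vn {p : ℝ} (hp1 : 1 < p) (hp2 : p < 2) {s a W : ℝ} (ha : 0 ≤ a) (hW : a ^ 2 + s ^ 2 ≤ W) :
    (a ^ 2 + s ^ 2) ^ ((p - 2) / 4) * a ≤ W ^ (p / 4) := by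
  have h0 : (0:ℝ) ≤ a ^ 2 + s ^ 2 := by positivity
  have h1 : a ≤ (a ^ 2 + s ^ 2) ^ ((1:ℝ)/2) := by
    rw [← Real.sqrt_eq_rpow]
    exact (Real.le_sqrt ha h0).mpr (by nlinarith [sq_nonneg s])
  calc (a ^ 2 + s ^ 2) ^ ((p - 2) / 4) * a
      ≤ (a ^ 2 + s ^ 2) ^ ((p - 2) / 4) * (a ^ 2 + s ^ 2) ^ ((1:ℝ)/2) :=
        mul_le_mul_of_nonneg_left h1 (Real.rpow_nonneg h0 _)
    _ = (a ^ 2 + s ^ 2) ^ ((p - 2) / 4 + 1/2) := (Real.rpow_add' h0 (by intro h; nlinarith [h] : (p-2)/4 + 1/2 ≠ 0)).symm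
    _ = (a ^ 2 + s ^ 2) ^ (p / 4) := by rw [show (p-2)/4 + 1/2 = p/4 by ring]
    _ ≤ W ^ (p / 4) := Real.rpow_le_rpow h0 hW (by linarith)

lemma sqBound {p : ℝ} (hp1 : 1 < p) (hp2 : p < 2) {s : ℝ} (ξ η : E) :
    ‖(‖ξ‖ ^ 2 + s ^ 2) ^ ((p - 2) / 4) • ξ - (‖η‖ ^ 2 + s ^ 2) ^ ((p - 2) / 4) • η‖
      ≤ 2 * (‖ξ‖ ^ 2 + ‖η‖ ^ 2 + s ^ 2) ^ (p / 4) := by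
  have h1 : ‖(‖ξ‖ ^ 2 + s ^ 2) ^ ((p - 2) / 4) • ξ‖ ≤ (‖ξ‖ ^ 2 + ‖η‖ ^ 2 + s ^ 2) ^ (p / 4) := by
    rw [norm_smul, Real.norm_eq_abs, abs_of_nonneg (Real.rpow_nonneg (by positivity) _)]
    exact Vn hp1 hp2 (norm_nonneg ξ) (by nlinarith [sq_nonneg ‖η‖])
  have h2 : ‖(‖η‖ ^ 2 + s ^ 2) ^ ((p - 2) / 4) • η‖ ≤ (‖ξ‖ ^ 2 + ‖η‖ ^ 2 + s ^ 2) ^ (p / 4) := by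
    rw [norm_smul, Real.norm_eq_abs, abs_of_nonneg (Real.rpow_nonneg (by positivity) _)]
    exact Vn hp1 hp2 (norm_nonneg η) (by nlinarith [sq_nonneg ‖ξ‖])
  calc ‖_ - _‖ ≤ ‖(‖ξ‖ ^ 2 + s ^ 2) ^ ((p - 2) / 4) • ξ‖ + ‖(‖η‖ ^ 2 + s ^ 2) ^ ((p - 2) / 4) • η‖ :=
        norm_sub_le _ _
    _ ≤ _ := by linarith

lemma diffBound {p : ℝ} (hp1 : 1 < p) (hp2 : p < 2) {s : ℝ} (ξ η : E) :
    ‖ξ - η‖ ≤ 2 * (‖ξ‖ ^ 2 + ‖η‖ ^ 2 + s ^ 2) ^ ((1:ℝ) / 2) := by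
  have key : ∀ a W : ℝ, 0 ≤ a → a ^ 2 ≤ W → a ≤ W ^ ((1:ℝ)/2) := by
    intro a W ha hW
    have h0 : (0:ℝ) ≤ W := le_trans (sq_nonneg a) hW
    rw [← Real.sqrt_eq_rpow]
    exact (Real.le_sqrt ha h0).mpr hW
  have h1 := key ‖ξ‖ _ (norm_nonneg ξ) (by nlinarith [sq_nonneg ‖η‖, sq_nonneg s] : ‖ξ‖ ^ 2 ≤ ‖ξ‖ ^ 2 + ‖η‖ ^ 2 + s ^ 2)
  have h2 := key ‖η‖ _ (norm_nonneg η) (by nlinarith [sq_nonneg ‖ξ‖, sq_nonneg s] : ‖η‖ ^ 2 ≤ ‖ξ‖ ^ 2 + ‖η‖ ^ 2 + s ^ 2)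
  calc ‖ξ - η‖ ≤ ‖ξ‖ + ‖η‖ := norm_sub_le _ _
    _ ≤ _ := by linarith

end Aux

/-- Hölder-interpolation bound:
`⨍_B |f-g|^p ≤ C (⨍_B |V(f)-V(g)|²)^{p/2} (⨍_B (|f|²+|g|²+s²)^{p/2})^{(2-p)/2}`
for `1 < p < 2`, where `V(ξ) = (|ξ|²+s²)^{(p-2)/4} ξ` and `C = C(n,p)`. -/
theorem avg_interpolation (n : ℕ) (p : ℝ) (hp1 : 1 < p) (hp2 : p < 2) :
    ∃ C : ℝ, 0 < C ∧
      ∀ (s : ℝ), 0 ≤ s → ∀ (x₀ : EuclideanSpace ℝ (Fin n)) (r : ℝ), 0 < r →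
      ∀ f g : EuclideanSpace ℝ (Fin n) → EuclideanSpace ℝ (Fin n),
        AEMeasurable f (volume.restrict (ball x₀ r)) →
        AEMeasurable g (volume.restrict (ball x₀ r)) →
        IntegrableOn (fun x => (‖f x‖ ^ 2 + ‖g x‖ ^ 2 + s ^ 2) ^ (p / 2)) (ball x₀ r) →
        (⨍ x in ball x₀ r, ‖f x - g x‖ ^ p)
          ≤ C * (⨍ x in ball x₀ r,
                ‖(‖f x‖ ^ 2 + s ^ 2) ^ ((p - 2) / 4) • f x -
                  (‖g x‖ ^ 2 + s ^ 2) ^ ((p - 2) / 4) • g x‖ ^ 2) ^ (p / 2)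
            * (⨍ x in ball x₀ r,
                (‖f x‖ ^ 2 + ‖g x‖ ^ 2 + s ^ 2) ^ (p / 2)) ^ ((2 - p) / 2) := by
  have hp0 : 0 < p := by linarith
  have h2p : 0 < 2 - p := by linarith
  refine ⟨(2 / p) ^ p, by positivity, ?_⟩
  intro s hs x₀ r hr f g hf hg h_int
  set B : Set (EuclideanSpace ℝ (Fin n)) := ball x₀ r with hB
  set μ : Measure (EuclideanSpace ℝ (Fin n)) := volume.restrict B with hμdef
  set VD : EuclideanSpace ℝ (Fin n) → EuclideanSpace ℝ (Fin n) :=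
    fun x => (‖f x‖ ^ 2 + s ^ 2) ^ ((p - 2) / 4) • f x -
      (‖g x‖ ^ 2 + s ^ 2) ^ ((p - 2) / 4) • g x with hVD
  set Wf : EuclideanSpace ℝ (Fin n) → ℝ := fun x => ‖f x‖ ^ 2 + ‖g x‖ ^ 2 + s ^ 2 with hWfdef
  have hWnn : ∀ x, (0:ℝ) ≤ Wf x := fun x => by rw [hWfdef]; positivity
  -- measurability
  have hVDm : AEMeasurable VD μ := by
    apply AEMeasurable.sub
    · exact (((hf.norm.pow_const 2).add_const (s ^ 2)).pow aemeasurable_const).smul hf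
    · exact (((hg.norm.pow_const 2).add_const (s ^ 2)).pow aemeasurable_const).smul hg
  have hVDsm : AEStronglyMeasurable VD μ := hVDm.aestronglyMeasurable
  have hWm : AEMeasurable Wf μ := ((hf.norm.pow_const 2).add (hg.norm.pow_const 2)).add_const _
  -- integrability of the weight
  have hIw : Integrable (fun x => Wf x ^ (p / 2)) μ := h_int
  have hIwnn : ∀ x, (0:ℝ) ≤ Wf x ^ (p / 2) := fun x => Real.rpow_nonneg (hWnn x) _
  -- rpow algebra helper
  have hWpow : ∀ (x : _) (y z : ℝ), y + z ≠ 0 → Wf x ^ (y + z) = Wf x ^ y * Wf x ^ z :=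
    fun x y z h => Real.rpow_add' (hWnn x) h
  -- bound : ‖VD x‖^2 ≤ 4 * Wf x ^ (p/2)
  have hVDsq : ∀ x, ‖VD x‖ ^ 2 ≤ 4 * Wf x ^ (p / 2) := by
    intro x
    have h1 := sqBound hp1 hp2 (s := s) (f x) (g x)
    have h2 : (2 * Wf x ^ (p / 4)) ^ 2 = 4 * Wf x ^ (p / 2) := by
      have := hWpow x (p/4) (p/4) (by positivity)
      rw [show p/4 + p/4 = p/2 by ring] at this
      rw [this]; ring
    calc ‖VD x‖ ^ 2 ≤ (2 * Wf x ^ (p / 4)) ^ 2 := by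
          apply pow_le_pow_left₀ (norm_nonneg _) h1
      _ = _ := h2
  have hIu : Integrable (fun x => ‖VD x‖ ^ 2) μ := by
    refine Integrable.mono' (hIw.const_mul 4) ?_ (Filter.Eventually.of_forall fun x => ?_)
    · exact ((hVDm.norm.pow_const 2)).aestronglyMeasurable
    · rw [Real.norm_eq_abs, abs_of_nonneg (by positivity)]
      exact hVDsq x
  -- LHS integrand
  have hφpt : ∀ x, ‖f x - g x‖ ^ p ≤ 4 * Wf x ^ (p / 2) := by
    intro x
    have h1 := diffBound hp1 hp2 (s := s) (f x) (g x)
    have h2 := Real.rpow_le_rpow (norm_nonneg _) h1 hp0.le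
    calc ‖f x - g x‖ ^ p ≤ (2 * Wf x ^ ((1:ℝ)/2)) ^ p := h2
      _ = 2 ^ p * (Wf x ^ ((1:ℝ)/2)) ^ p := Real.mul_rpow (by norm_num) (Real.rpow_nonneg (hWnn x) _)
      _ = 2 ^ p * Wf x ^ (p / 2) := by
          rw [← Real.rpow_mul (hWnn x), show (1:ℝ)/2 * p = p/2 by ring]
      _ ≤ 4 * Wf x ^ (p / 2) := by
          have h3 : (2:ℝ) ^ p ≤ 2 ^ (2:ℝ) := Real.rpow_le_rpow_of_exponent_le one_le_two hp2.le
          have h4 : (2:ℝ) ^ (2:ℝ) = 4 := by rw [Real.rpow_two]; norm_num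
          have := Real.rpow_nonneg (hWnn x) (p/2)
          nlinarith
  have hIφ : Integrable (fun x => ‖f x - g x‖ ^ p) μ := by
    refine Integrable.mono' (hIw.const_mul 4) ?_ (Filter.Eventually.of_forall fun x => ?_)
    · exact ((hf.sub hg).norm.pow aemeasurable_const).aestronglyMeasurable
    · rw [Real.norm_eq_abs, abs_of_nonneg (Real.rpow_nonneg (norm_nonneg _) _)]
      exact hφpt x
  -- the product function for Hölder
  set q : ℝ := p * (2 - p) / 4 with hq
  have hIprod : Integrable (fun x => ‖VD x‖ ^ p * Wf x ^ q) μ := by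
    refine Integrable.mono' (hIw.const_mul 4) ?_ (Filter.Eventually.of_forall fun x => ?_)
    · exact ((hVDm.norm.pow aemeasurable_const).mul (hWm.pow aemeasurable_const)).aestronglyMeasurable
    · rw [Real.norm_eq_abs, abs_of_nonneg (mul_nonneg (Real.rpow_nonneg (norm_nonneg _) _)
        (Real.rpow_nonneg (hWnn x) _))]
      have h1 : ‖VD x‖ ^ p ≤ (2 * Wf x ^ (p / 4)) ^ p :=
        Real.rpow_le_rpow (norm_nonneg _) (sqBound hp1 hp2 (f x) (g x)) hp0.le
      have h2 : (2 * Wf x ^ (p / 4)) ^ p = 2 ^ p * Wf x ^ (p * p / 4) := by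
        rw [Real.mul_rpow (by norm_num) (Real.rpow_nonneg (hWnn x) _),
          ← Real.rpow_mul (hWnn x), show p/4 * p = p * p / 4 by ring]
      have h3 : Wf x ^ (p * p / 4) * Wf x ^ q = Wf x ^ (p / 2) := by
        rw [← hWpow x _ _ (by rw [hq]; intro h; nlinarith), hq,
          show p * p / 4 + p * (2 - p) / 4 = p / 2 by ring]
      have h4 : (2:ℝ) ^ p ≤ 4 := by
        have h3' : (2:ℝ) ^ p ≤ 2 ^ (2:ℝ) := Real.rpow_le_rpow_of_exponent_le one_le_two hp2.le
        have h4' : (2:ℝ) ^ (2:ℝ) = 4 := by rw [Real.rpow_two]; norm_num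
        linarith
      calc ‖VD x‖ ^ p * Wf x ^ q ≤ 2 ^ p * Wf x ^ (p * p / 4) * Wf x ^ q := by
            apply mul_le_mul_of_nonneg_right _ (Real.rpow_nonneg (hWnn x) _)
            rw [← h2]; exact h1
        _ = 2 ^ p * Wf x ^ (p / 2) := by rw [mul_assoc, h3]
        _ ≤ 4 * Wf x ^ (p / 2) := mul_le_mul_of_nonneg_right h4 (Real.rpow_nonneg (hWnn x) _)
  -- Hölder
  have hpq : ((2:ℝ)/p).HolderConjugate (2/(2-p)) := by
    rw [Real.holderConjugate_iff]
    constructor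
    · rw [lt_div_iff₀ hp0]; linarith
    · rw [inv_div, inv_div]; field_simp; ring
  have MA : MemLp (fun x => ‖VD x‖ ^ p) (ENNReal.ofReal (2/p)) μ := by
    have h2 : MemLp VD 2 μ := (memLp_two_iff_integrable_sq_norm hVDsm).mpr hIu
    have h3 := h2.norm_rpow_div (ENNReal.ofReal p)
    rw [ENNReal.toReal_ofReal hp0.le] at h3
    convert h3 using 1
    rw [ENNReal.ofReal_div_of_pos hp0]
    norm_num
  have MB : MemLp (fun x => Wf x ^ q) (ENNReal.ofReal (2/(2-p))) μ := by
    have h1 : MemLp (fun x => Wf x ^ (p/2)) 1 μ := memLp_one_iff_integrable.mpr hIw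
    have h3 := h1.norm_rpow_div (ENNReal.ofReal ((2-p)/2))
    rw [ENNReal.toReal_ofReal (by linarith)] at h3
    have heq : (fun x => ‖Wf x ^ (p/2)‖ ^ ((2-p)/2)) = fun x => Wf x ^ q := by
      funext x
      rw [Real.norm_eq_abs, abs_of_nonneg (Real.rpow_nonneg (hWnn x) _),
        ← Real.rpow_mul (hWnn x), hq, show p/2 * ((2-p)/2) = p * (2-p)/4 by ring]
    have hexp : (1 : ℝ≥0∞) / ENNReal.ofReal ((2-p)/2) = ENNReal.ofReal (2/(2-p)) := by
      rw [one_div, ← ENNReal.ofReal_inv_of_pos (by linarith), inv_div]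
    rw [heq, hexp] at h3
    exact h3
  have holder := integral_mul_le_Lp_mul_Lq_of_nonneg hpq
    (Filter.Eventually.of_forall fun x => Real.rpow_nonneg (norm_nonneg _) p)
    (Filter.Eventually.of_forall fun x => Real.rpow_nonneg (hWnn x) q) MA MB
  -- simplify the three integrals in holder
  have e1 : ∀ x, (‖VD x‖ ^ p) ^ ((2:ℝ)/p) = (‖VD x‖ ^ 2 : ℝ) := by
    intro x
    rw [← Real.rpow_natCast (‖VD x‖) 2, ← Real.rpow_mul (norm_nonneg _),
      show p * ((2:ℝ)/p) = 2 by field_simp]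
    norm_num
  have e2 : ∀ x, (Wf x ^ q) ^ ((2:ℝ)/(2-p)) = Wf x ^ (p/2) := by
    intro x
    rw [← Real.rpow_mul (hWnn x), hq, show p * (2-p)/4 * ((2:ℝ)/(2-p)) = p/2 by
      field_simp; ring]
  have i1eq : ∫ x, (‖VD x‖ ^ p) ^ ((2:ℝ)/p) ∂μ = ∫ x, (‖VD x‖ ^ 2 : ℝ) ∂μ := by
    apply integral_congr_ae (Filter.Eventually.of_forall fun x => e1 x)
  have i2eq : ∫ x, (Wf x ^ q) ^ ((2:ℝ)/(2-p)) ∂μ = ∫ x, Wf x ^ (p/2) ∂μ := by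
    apply integral_congr_ae (Filter.Eventually.of_forall fun x => e2 x)
  rw [i1eq, i2eq, show (1:ℝ)/((2:ℝ)/p) = p/2 by field_simp,
    show (1:ℝ)/((2:ℝ)/(2-p)) = (2-p)/2 by field_simp] at holder
  -- pointwise interpolation bound
  have hpt : ∀ x, ‖f x - g x‖ ^ p ≤ (2/p) ^ p * (‖VD x‖ ^ p * Wf x ^ q) := by
    intro x
    have h1 := vecbound hp1 hp2 (s := s) (f x) (g x)
    have h2 := Real.rpow_le_rpow (norm_nonneg _) h1 hp0.le
    calc ‖f x - g x‖ ^ p ≤ (2 / p * ‖VD x‖ * Wf x ^ ((2 - p) / 4)) ^ p := h2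
      _ = (2/p) ^ p * (‖VD x‖ ^ p * Wf x ^ q) := by
          rw [Real.mul_rpow (by positivity) (Real.rpow_nonneg (hWnn x) _),
            Real.mul_rpow (by positivity) (norm_nonneg _),
            ← Real.rpow_mul (hWnn x), show (2-p)/4 * p = p * (2-p)/4 by ring, ← hq, mul_assoc]
  -- integral-level main inequality
  have hmain : ∫ x, ‖f x - g x‖ ^ p ∂μ
      ≤ (2/p) ^ p * ((∫ x, (‖VD x‖ ^ 2 : ℝ) ∂μ) ^ (p/2) * (∫ x, Wf x ^ (p/2) ∂μ) ^ ((2-p)/2)) := by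
    calc ∫ x, ‖f x - g x‖ ^ p ∂μ ≤ ∫ x, (2/p) ^ p * (‖VD x‖ ^ p * Wf x ^ q) ∂μ :=
          integral_mono hIφ (hIprod.const_mul _) hpt
      _ = (2/p) ^ p * ∫ x, ‖VD x‖ ^ p * Wf x ^ q ∂μ := integral_const_mul _ _
      _ ≤ _ := by
          apply mul_le_mul_of_nonneg_left holder (by positivity)
  -- averages
  rw [setAverage_eq, setAverage_eq, setAverage_eq]
  set m : ℝ := (volume B).toReal with hm
  have hmpos : 0 < m := by
    rw [hm]
    refine ENNReal.toReal_pos (ne_of_gt ?_) (ne_of_lt ?_)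
    · exact measure_ball_pos volume x₀ hr
    · exact measure_ball_lt_top
  have hI2nn : 0 ≤ ∫ x, (‖VD x‖ ^ 2 : ℝ) ∂μ := integral_nonneg fun x => by positivity
  have hI3nn : 0 ≤ ∫ x, Wf x ^ (p/2) ∂μ := integral_nonneg fun x => Real.rpow_nonneg (hWnn x) _
  simp only [smul_eq_mul]
  rw [Real.mul_rpow (by positivity) hI2nn, Real.mul_rpow (by positivity) hI3nn]
  have hminv : (m⁻¹) ^ (p/2) * (m⁻¹) ^ ((2-p)/2) = m⁻¹ := by
    rw [← Real.rpow_add (by positivity), show p/2 + (2-p)/2 = 1 by ring, Real.rpow_one]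
  calc m⁻¹ * ∫ x, ‖f x - g x‖ ^ p ∂μ
      ≤ m⁻¹ * ((2/p) ^ p * ((∫ x, (‖VD x‖ ^ 2 : ℝ) ∂μ) ^ (p/2) * (∫ x, Wf x ^ (p/2) ∂μ) ^ ((2-p)/2))) :=
        mul_le_mul_of_nonneg_left hmain (by positivity)
    _ = (2/p) ^ p * (m⁻¹ ^ (p/2) * (∫ x, (‖VD x‖ ^ 2 : ℝ) ∂μ) ^ (p/2))
        * (m⁻¹ ^ ((2-p)/2) * (∫ x, Wf x ^ (p/2) ∂μ) ^ ((2-p)/2)) := by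
        linear_combination (-((2/p) ^ p * (∫ x, (‖VD x‖ ^ 2 : ℝ) ∂μ) ^ (p/2)
          * (∫ x, Wf x ^ (p/2) ∂μ) ^ ((2-p)/2))) * hminv
end

section
/- Let R > 0, s ≥ 0, and let g : B_R(x₀) → [0,∞) be a bounded measurable function. Suppose there exists ρ₀ ∈ (0, R/4] and C₁ ≥ 0 such that for every ball B_{2ρ}(x) ⊂⊂ B_R(x₀) with ρ ∈ (0, ρ₀], one has g(x) ≤ C₁ ρ^{-n} ∫_{B_ρ(x)} g + 3^{-n} ( sup_{B_ρ(x)} g + s ) for a.e. x. Then sup_{B_{R/2}(x₀)} g + s ≤ C R^{-n} ∫_{B_R(x₀)} (g + s), where C depends only on n, C₁ and ρ₀/R. -/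
open MeasureTheory Metric Set

set_option maxHeartbeats 2000000 in
/-- Abstract absorption/bootstrap argument: if a bounded nonnegative `g` satisfies
`g(x) ≤ C₁ ρ^{-n} ∫_{B_ρ(x)} g + 3^{-n}(sup_{B_ρ(x)} g + s)` on all balls
`B_{2ρ}(x) ⊂⊂ B_R(x₀)` with `ρ ≤ ρ₀ = θR`, then
`sup_{B_{R/2}(x₀)} g + s ≤ C R^{-n} ∫_{B_R(x₀)} (g + s)`, with `C = C(n, C₁, θ)`. -/
theorem absorption_bootstrap (n : ℕ) (C₁ θ : ℝ) (hC₁ : 0 ≤ C₁)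
    (hθ0 : 0 < θ) (hθ1 : θ ≤ 1 / 4) :
    ∃ C : ℝ, 0 < C ∧
      ∀ (R s : ℝ), 0 < R → 0 ≤ s →
      ∀ (x₀ : EuclideanSpace ℝ (Fin n)) (g : EuclideanSpace ℝ (Fin n) → ℝ),
        Measurable g → (∀ x, 0 ≤ g x) → (∃ M, ∀ x, g x ≤ M) →
        (∀ x ∈ ball x₀ R, ∀ ρ : ℝ, 0 < ρ → ρ ≤ θ * R →
          closedBall x (2 * ρ) ⊆ ball x₀ R →
          g x ≤ C₁ * ρ ^ (-(n:ℝ)) * (∫ y in ball x ρ, g y) +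
            (3:ℝ) ^ (-(n:ℝ)) * (sSup (g '' ball x ρ) + s)) →
        sSup (g '' ball x₀ (R / 2)) + s
          ≤ C * R ^ (-(n:ℝ)) * ∫ y in ball x₀ R, (g y + s) := by
  classical
  obtain ⟨cn, hcn_def⟩ : ∃ c : ℝ, c = (volume (ball (0 : EuclideanSpace ℝ (Fin n)) 1)).toReal :=
    ⟨_, rfl⟩
  have hcn : 0 < cn := by
    rw [hcn_def]
    exact ENNReal.toReal_pos (measure_ball_pos volume 0 one_pos).ne' measure_ball_lt_top.ne
  obtain ⟨K₀, hK₀_def⟩ : ∃ K : ℝ, K = (max (3/(4*θ)) 4)^n := ⟨_, rfl⟩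
  have hK₀ : 0 < K₀ := by
    rw [hK₀_def]; exact pow_pos (lt_max_of_lt_right (by norm_num)) n
  refine ⟨(9/5)*4^n*C₁*K₀ + 14/(5*cn), ?_, ?_⟩
  · have h1 : (0:ℝ) ≤ (9/5)*4^n*C₁*K₀ :=
      mul_nonneg (mul_nonneg (by positivity) hC₁) hK₀.le
    have h2 : (0:ℝ) < 14/(5*cn) := div_pos (by norm_num) (by linarith)
    linarith
  intro R s hR hs x₀ g hgm hg0 hMex hyp
  obtain ⟨M, hM⟩ := hMex
  have hM0 : 0 ≤ M := le_trans (hg0 x₀) (hM x₀)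
  obtain ⟨I, hI_def⟩ : ∃ I : ℝ, I = ∫ y in ball x₀ R, (g y + s) := ⟨_, rfl⟩
  have hIntg : IntegrableOn g (ball x₀ R) volume := by
    refine Measure.integrableOn_of_bounded (M := M) measure_ball_lt_top.ne
      hgm.aestronglyMeasurable ?_
    exact ae_of_all _ fun y => by
      rw [Real.norm_eq_abs, abs_of_nonneg (hg0 y)]; exact hM y
  have hIntgs : IntegrableOn (fun y => g y + s) (ball x₀ R) volume :=
    hIntg.add (integrableOn_const measure_ball_lt_top.ne)
  have hI0 : 0 ≤ I := hI_def ▸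
    setIntegral_nonneg measurableSet_ball fun y _ => add_nonneg (hg0 y) hs
  have hrpow : ∀ (a : ℝ), 0 ≤ a → a ^ (-(n:ℝ)) = (a^n)⁻¹ := fun a ha => by
    rw [Real.rpow_neg ha, Real.rpow_natCast]
  rcases Nat.eq_zero_or_pos n with hn | hn
  · -- n = 0 : the space is a single point
    subst hn
    have hball : ∀ (x : EuclideanSpace ℝ (Fin 0)) (r : ℝ), 0 < r → ball x r = univ := by
      intro x r hr
      apply eq_univ_of_forall
      intro y
      rw [mem_ball, Subsingleton.elim y x, dist_self]
      exact hr
    have hgconst : g = fun _ => g x₀ := funext fun y => by rw [Subsingleton.elim y x₀]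
    have hsup : sSup (g '' ball x₀ (R/2)) = g x₀ := by
      rw [hball x₀ (R/2) (by linarith), hgconst, image_univ, Set.range_const, csSup_singleton]
    have hI : I = cn * (g x₀ + s) := by
      rw [hI_def, hball x₀ R hR]
      have h1 : (fun y => g y + s) = fun _ : EuclideanSpace ℝ (Fin 0) => g x₀ + s :=
        funext fun y => by rw [Subsingleton.elim y x₀]
      rw [h1, Measure.restrict_univ, integral_const, smul_eq_mul, hcn_def,
        hball 0 1 one_pos]
      rfl
    have hr0 : R ^ (-((0:ℕ):ℝ)) = 1 := by norm_num
    rw [← hI_def, hsup, hr0, hI]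
    have hgs0 : 0 ≤ g x₀ + s := add_nonneg (hg0 x₀) hs
    have h1 : (0:ℝ) ≤ (9/5)*4^0*C₁*K₀ :=
      mul_nonneg (mul_nonneg (by positivity) hC₁) hK₀.le
    have h2 : 14/(5*cn) * cn = 14/5 := by field_simp
    nlinarith [mul_nonneg (mul_nonneg h1 hcn.le) hgs0]
  · -- main case n ≥ 1
    haveI : Nontrivial (EuclideanSpace ℝ (Fin n)) :=
      ⟨0, EuclideanSpace.single ⟨0, hn⟩ 1, by
        intro h
        have := congrArg (fun v => v ⟨0, hn⟩) h
        simp [EuclideanSpace.single_apply] at this⟩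
    have hRN : (0:ℝ) < R^n := pow_pos hR n
    have hvol : (volume (ball x₀ R)).toReal = R^n * cn := by
      rw [Measure.addHaar_ball volume x₀ hR.le, finrank_euclideanSpace_fin,
        ENNReal.toReal_mul, ENNReal.toReal_ofReal (pow_nonneg hR.le n), hcn_def]
    have hsI : s * (R^n * cn) ≤ I := by
      have h1 : (∫ (_ : EuclideanSpace ℝ (Fin n)) in ball x₀ R, s) = s * (R^n * cn) := by
        rw [setIntegral_const, Measure.real, hvol, smul_eq_mul]; ring
      rw [hI_def]
      calc s * (R^n*cn) = ∫ (_ : EuclideanSpace ℝ (Fin n)) in ball x₀ R, s := h1.symm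
        _ ≤ _ := setIntegral_mono (integrableOn_const measure_ball_lt_top.ne) hIntgs
            fun y => le_add_of_nonneg_left (hg0 y)
    obtain ⟨D, hD⟩ : ∃ D : EuclideanSpace ℝ (Fin n) → ℝ,
        D = fun x => 3*R/4 - dist x x₀ := ⟨_, rfl⟩
    obtain ⟨S, hS⟩ : ∃ S : Set (EuclideanSpace ℝ (Fin n)), S = ball x₀ (3*R/4) := ⟨_, rfl⟩
    obtain ⟨φ, hφ⟩ : ∃ φ : EuclideanSpace ℝ (Fin n) → ℝ,
        φ = fun x => (D x)^n * g x := ⟨_, rfl⟩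
    have hx₀S : x₀ ∈ S := by rw [hS, mem_ball, dist_self]; linarith
    have hDpos : ∀ x ∈ S, 0 < D x := by
      intro x hx
      rw [hS, mem_ball] at hx
      rw [hD]; simp only; linarith
    have hDle : ∀ x : EuclideanSpace ℝ (Fin n), D x ≤ 3*R/4 := by
      intro x
      have := dist_nonneg (x := x) (y := x₀)
      rw [hD]; simp only; linarith
    have hbdd : BddAbove (φ '' S) := by
      refine ⟨(3*R/4)^n * M, ?_⟩
      rintro _ ⟨x, hx, rfl⟩
      rw [hφ]; simp only
      exact mul_le_mul (pow_le_pow_left₀ (hDpos x hx).le (hDle x) n) (hM x) (hg0 x)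
        (pow_nonneg (by linarith) n)
    obtain ⟨F, hF⟩ : ∃ F : ℝ, F = sSup (φ '' S) := ⟨_, rfl⟩
    have hFmem : ∀ x ∈ S, φ x ≤ F := fun x hx =>
      hF ▸ le_csSup hbdd (mem_image_of_mem φ hx)
    have hF0 : 0 ≤ F := by
      have h1 : φ x₀ ≤ F := hFmem x₀ hx₀S
      have h2 : 0 ≤ φ x₀ := by
        rw [hφ]; exact mul_nonneg (pow_nonneg (hDpos x₀ hx₀S).le n) (hg0 x₀)
      linarith
    have hkey : ∀ x ∈ S, φ x ≤ C₁ * K₀ * I + (4/9)^n * F + (R/4)^n * s := by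
      intro x hx
      have hdx : 0 < D x := hDpos x hx
      have hdxR : D x ≤ 3*R/4 := hDle x
      have hdist : dist x x₀ = 3*R/4 - D x := by rw [hD]; simp only; ring
      obtain ⟨ρ, hρdef⟩ : ∃ r : ℝ, r = min (θ*R) (D x/4) := ⟨_, rfl⟩
      have hρ0 : 0 < ρ := hρdef ▸ lt_min (mul_pos hθ0 hR) (by linarith)
      have hρθ : ρ ≤ θ*R := hρdef ▸ min_le_left _ _
      have hρd : ρ ≤ D x / 4 := hρdef ▸ min_le_right _ _
      have hxR : x ∈ ball x₀ R := by
        rw [mem_ball, hdist]; linarith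
      have hsub : closedBall x (2*ρ) ⊆ ball x₀ R := by
        intro y hy
        have h1 : dist y x ≤ 2*ρ := mem_closedBall.mp hy
        have h2 := dist_triangle y x x₀
        rw [hdist] at h2
        rw [mem_ball]
        linarith
      have hineq := hyp x hxR ρ hρ0 hρθ hsub
      have hJ0 : 0 ≤ ∫ y in ball x ρ, g y :=
        setIntegral_nonneg measurableSet_ball fun y _ => hg0 y
      have hJI : (∫ y in ball x ρ, g y) ≤ I := by
        have hsub2 : ball x ρ ⊆ ball x₀ R := fun y hy =>
          hsub (mem_closedBall.mpr (le_trans (mem_ball.mp hy).le (by linarith)))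
        rw [hI_def]
        calc (∫ y in ball x ρ, g y) ≤ ∫ y in ball x₀ R, g y :=
              setIntegral_mono_set hIntg (ae_of_all _ fun y => hg0 y)
                (HasSubset.Subset.eventuallyLE hsub2)
          _ ≤ _ := setIntegral_mono hIntg hIntgs fun y => le_add_of_nonneg_right hs
      have hT : sSup (g '' ball x ρ) ≤ F / (3/4 * D x)^n := by
        apply csSup_le (Set.Nonempty.image _ (nonempty_ball.mpr hρ0))
        rintro _ ⟨y, hy, rfl⟩
        have h1 : dist y x < ρ := mem_ball.mp hy
        have h2 := dist_triangle y x x₀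
        have hDy : D y = 3*R/4 - dist y x₀ := by rw [hD]
        have hdy : 3/4 * D x ≤ D y := by
          rw [hDy]; rw [hdist] at h2; linarith
        have hyS : y ∈ S := by
          rw [hS, mem_ball]
          have h3 : (0:ℝ) < 3/4 * D x := by linarith
          rw [hDy] at hdy
          linarith
        have hφy : (D y)^n * g y ≤ F := by
          have := hFmem y hyS
          rw [hφ] at this
          exact this
        have hp : (0:ℝ) < (3/4 * D x)^n := pow_pos (by linarith) n
        rw [le_div_iff₀ hp]
        calc g y * (3/4*D x)^n ≤ g y * (D y)^n :=
              mul_le_mul_of_nonneg_left (pow_le_pow_left₀ (by linarith) hdy n) (hg0 y)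
          _ = (D y)^n * g y := mul_comm _ _
          _ ≤ F := hφy
      have h3n : (3:ℝ) ^ (-(n:ℝ)) = (1/3:ℝ)^n := by
        rw [hrpow 3 (by norm_num), one_div, inv_pow]
      have hρr : ρ ^ (-(n:ℝ)) = (ρ^n)⁻¹ := hrpow ρ hρ0.le
      have hdρ : D x / ρ ≤ max (3/(4*θ)) 4 := by
        rcases le_or_gt (θ*R) (D x/4) with h | h
        · have hρeq : ρ = θ*R := hρdef.trans (min_eq_left h)
          rw [hρeq]
          refine le_trans ?_ (le_max_left _ _)
          rw [div_le_div_iff₀ (mul_pos hθ0 hR) (by linarith)]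
          have h5 : D x * (4*θ) ≤ 3*R/4 * (4*θ) :=
            mul_le_mul_of_nonneg_right hdxR (by linarith)
          have h6 : 3*R/4*(4*θ) = 3*(θ*R) := by ring
          linarith
        · have hρeq : ρ = D x/4 := hρdef.trans (min_eq_right h.le)
          rw [hρeq]
          have h4 : D x / (D x / 4) = 4 := by field_simp
          rw [h4]
          exact le_max_right _ _
      have hKbound : (D x)^n * (ρ^n)⁻¹ ≤ K₀ := by
        have heq : (D x)^n * (ρ^n)⁻¹ = (D x / ρ)^n := by
          rw [div_pow]; ring
        rw [heq, hK₀_def]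
        exact pow_le_pow_left₀ (div_pos hdx hρ0).le hdρ n
      -- assemble
      rw [hρr, h3n] at hineq
      have hmain : (D x)^n * g x ≤
          (D x)^n * (C₁ * (ρ^n)⁻¹ * (∫ y in ball x ρ, g y))
            + (D x)^n * ((1/3:ℝ)^n * (sSup (g '' ball x ρ) + s)) := by
        have h := mul_le_mul_of_nonneg_left hineq (pow_nonneg hdx.le n)
        calc (D x)^n * g x
            ≤ (D x)^n * ((C₁ * (ρ^n)⁻¹ * (∫ y in ball x ρ, g y))
              + (1/3:ℝ)^n * (sSup (g '' ball x ρ) + s)) := h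
          _ = _ := by ring
      have hpart1 : (D x)^n * (C₁ * (ρ^n)⁻¹ * (∫ y in ball x ρ, g y)) ≤ C₁ * K₀ * I := by
        have e1 : (D x)^n * (C₁ * (ρ^n)⁻¹ * (∫ y in ball x ρ, g y))
            = C₁ * ((D x)^n * (ρ^n)⁻¹) * (∫ y in ball x ρ, g y) := by ring
        rw [e1]
        exact mul_le_mul (mul_le_mul_of_nonneg_left hKbound hC₁) hJI hJ0
          (mul_nonneg hC₁ hK₀.le)
      have hpart2 : (D x)^n * ((1/3:ℝ)^n * (sSup (g '' ball x ρ) + s))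
          ≤ (4/9)^n * F + (R/4)^n * s := by
        have hTd : (D x)^n * sSup (g '' ball x ρ) ≤ (4/3)^n * F := by
          have h1 : (D x)^n * sSup (g '' ball x ρ) ≤ (D x)^n * (F / (3/4*D x)^n) :=
            mul_le_mul_of_nonneg_left hT (pow_nonneg hdx.le n)
          have h2 : (D x)^n * (F / (3/4*D x)^n) = (4/3)^n * F := by
            have hq : D x / (3/4*D x) = 4/3 := by
              rw [div_eq_iff (by linarith : (3:ℝ)/4*D x ≠ 0)]
              ring
            calc (D x)^n * (F / (3/4*D x)^n)
                = F * ((D x)^n / (3/4*D x)^n) := by ring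
              _ = F * (D x / (3/4*D x))^n := by rw [div_pow]
              _ = F * (4/3)^n := by rw [hq]
              _ = (4/3)^n * F := mul_comm _ _
          rw [h2] at h1
          exact h1
        have hds : (D x)^n * s ≤ (3*R/4)^n * s :=
          mul_le_mul_of_nonneg_right (pow_le_pow_left₀ hdx.le hdxR n) hs
        have e49 : (1/3:ℝ)^n * (4/3)^n = ((4:ℝ)/9)^n := by
          rw [← mul_pow]; norm_num
        have eR4 : (1/3:ℝ)^n * (3*R/4)^n = (R/4)^n := by
          rw [← mul_pow]
          congr 1
          ring
        have h13 : (0:ℝ) ≤ (1/3:ℝ)^n := by positivity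
        calc (D x)^n * ((1/3:ℝ)^n * (sSup (g '' ball x ρ) + s))
            = (1/3:ℝ)^n * ((D x)^n * sSup (g '' ball x ρ)) + (1/3:ℝ)^n * ((D x)^n * s) := by
              ring
          _ ≤ (1/3:ℝ)^n * ((4/3)^n * F) + (1/3:ℝ)^n * ((3*R/4)^n * s) := by
              have ha := mul_le_mul_of_nonneg_left hTd h13
              have hb := mul_le_mul_of_nonneg_left hds h13
              linarith
          _ = (4/9)^n * F + (R/4)^n * s := by
              rw [← mul_assoc, ← mul_assoc, e49, eR4]
      rw [hφ]; simp only
      linarith [hmain, hpart1, hpart2]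
    have hFle : F ≤ C₁*K₀*I + (4/9)^n * F + (R/4)^n * s := by
      have h : sSup (φ '' S) ≤ C₁*K₀*I + (4/9)^n * F + (R/4)^n * s := by
        apply csSup_le (Set.Nonempty.image φ ⟨x₀, hx₀S⟩)
        rintro _ ⟨x, hx, rfl⟩
        exact hkey x hx
      rw [← hF] at h
      exact h
    have hq : ((4:ℝ)/9)^n ≤ 4/9 := by
      calc ((4:ℝ)/9)^n ≤ ((4:ℝ)/9)^1 :=
            pow_le_pow_of_le_one (by norm_num) (by norm_num) hn
        _ = 4/9 := pow_one _
    have hFbound : F ≤ (9/5) * (C₁*K₀*I + (R/4)^n * s) := by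
      have h1 : ((4:ℝ)/9)^n * F ≤ (4/9) * F := mul_le_mul_of_nonneg_right hq hF0
      linarith
    -- final
    have hQ : (0:ℝ) < (R/4)^n := pow_pos (by linarith) n
    have hfin : ∀ x ∈ ball x₀ (R/2), g x ≤ F / (R/4)^n := by
      intro x hx
      have hx' := mem_ball.mp hx
      have hd : R/4 ≤ D x := by rw [hD]; simp only; linarith
      have hxS : x ∈ S := by rw [hS, mem_ball]; linarith
      have hφx : (D x)^n * g x ≤ F := by
        have := hFmem x hxS
        rw [hφ] at this
        exact this
      rw [le_div_iff₀ hQ]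
      calc g x * (R/4)^n ≤ g x * (D x)^n :=
            mul_le_mul_of_nonneg_left (pow_le_pow_left₀ (by linarith) hd n) (hg0 x)
        _ = (D x)^n * g x := mul_comm _ _
        _ ≤ F := hφx
    have hsup : sSup (g '' ball x₀ (R/2)) ≤ F / (R/4)^n := by
      apply csSup_le (Set.Nonempty.image g (nonempty_ball.mpr (by linarith)))
      rintro _ ⟨x, hx, rfl⟩
      exact hfin x hx
    rw [← hI_def, hrpow R hR.le]
    have h4n : (0:ℝ) < (4:ℝ)^n := by positivity
    have hQR : (R/4)^n * 4^n = R^n := by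
      rw [← mul_pow, div_mul_cancel₀]
      norm_num
    have hsupQ : sSup (g '' ball x₀ (R/2)) * (R/4)^n ≤ F := (le_div_iff₀ hQ).mp hsup
    have hsupRn : sSup (g '' ball x₀ (R/2)) * R^n ≤ F * 4^n := by
      calc sSup (g '' ball x₀ (R/2)) * R^n
          = (sSup (g '' ball x₀ (R/2)) * (R/4)^n) * 4^n := by rw [mul_assoc, hQR]
        _ ≤ F * 4^n := mul_le_mul_of_nonneg_right hsupQ h4n.le
    have hF4 : F * 4^n ≤ (9/5)*C₁*K₀*I*4^n + (9/5)*(R^n*s) := by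
      have h1 : F * 4^n ≤ ((9/5) * (C₁*K₀*I + (R/4)^n * s)) * 4^n :=
        mul_le_mul_of_nonneg_right hFbound h4n.le
      have h2 : ((9/5) * (C₁*K₀*I + (R/4)^n * s)) * 4^n
          = (9/5)*C₁*K₀*I*4^n + (9/5)*((R/4)^n*4^n*s) := by ring
      rw [h2, hQR] at h1
      linarith
    have hsRn : s * R^n ≤ I * cn⁻¹ := by
      have h1 : s * R^n * cn ≤ I := by linarith [hsI]
      calc s * R^n = (s * R^n * cn) * cn⁻¹ := by
            rw [mul_assoc (s * R^n), mul_inv_cancel₀ hcn.ne', mul_one]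
        _ ≤ I * cn⁻¹ := mul_le_mul_of_nonneg_right h1 (inv_nonneg.mpr hcn.le)
    have hgoal : (sSup (g '' ball x₀ (R/2)) + s) * R^n
        ≤ ((9/5)*4^n*C₁*K₀ + 14/(5*cn)) * I := by
      have hC2 : (14:ℝ)/(5*cn) = (14/5) * cn⁻¹ := by
        rw [div_eq_mul_inv, mul_inv]; ring
      have e : ((9/5)*4^n*C₁*K₀ + 14/(5*cn)) * I
          = (9/5)*C₁*K₀*I*4^n + (14/5)*(I*cn⁻¹) := by rw [hC2]; ring
      rw [e]
      have hexp : (sSup (g '' ball x₀ (R/2)) + s) * R^n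
          = sSup (g '' ball x₀ (R/2)) * R^n + s * R^n := by ring
      rw [hexp]
      linarith [hsupRn, hF4, hsRn]
    have h := (le_div_iff₀ hRN).mpr hgoal
    calc sSup (g '' ball x₀ (R/2)) + s
        ≤ (((9/5)*4^n*C₁*K₀ + 14/(5*cn)) * I) / R^n := h
      _ = ((9/5)*4^n*C₁*K₀ + 14/(5*cn)) * (R^n)⁻¹ * I := by ring
end
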